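/- Let v = (v₁,…,v_n) ∈ ℝ^n have ℓ₂-norm ‖v‖₂ = 1, and let C₀ ≥ 4.706. Then, for x chosen uniformly at random from {0,1}^n, ℙ( 1/C₀ ≤ |⟨x, v⟩ − (1/2)·Σ_{i=1}^n v_i| ≤ C₀ ) ≥ 1/C₀. -/

import Mathlib

open Finset

/-- The probability, over `x` chosen uniformly at random from `{0,1}^n`
(encoded as `Fin n → Fin 2`), of an event `E`. -/
noncomputable def cubeProb (n : ℕ) (E : Set (Fin n → Fin 2)) : ℝ :=
  (E.ncard : ℝ) / 2 ^ n

noncomputable def rad : Fin 2 → ℝ := fun b => 2 * ((b : ℕ) : ℝ) - 1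

noncomputable def Tsum {n : ℕ} (w : Fin n → ℝ) (x : Fin n → Fin 2) : ℝ :=
  ∑ j, rad (x j) * w j

lemma sum_cube_succ {n : ℕ} (f : (Fin (n+1) → Fin 2) → ℝ) :
    ∑ x : Fin (n+1) → Fin 2, f x = ∑ b : Fin 2, ∑ y : Fin n → Fin 2, f (Fin.cons b y) := by
  rw [← Equiv.sum_comp (Fin.consEquiv (fun _ => Fin 2)) f, Fintype.sum_prod_type]
  rfl

lemma Tsum_cons {n : ℕ} (w : Fin (n+1) → ℝ) (b : Fin 2) (y : Fin n → Fin 2) :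
    Tsum w (Fin.cons b y) = rad b * w 0 + Tsum (fun j => w j.succ) y := by
  simp [Tsum, Fin.sum_univ_succ]

lemma card_cube (n : ℕ) : (Finset.univ : Finset (Fin n → Fin 2)).card = 2 ^ n := by
  simp [Finset.card_univ]

lemma rad_zero : rad 0 = -1 := by norm_num [rad]
lemma rad_one : rad 1 = 1 := by norm_num [rad]

lemma sum_T_sq {n : ℕ} (w : Fin n → ℝ) :
    ∑ x : Fin n → Fin 2, (Tsum w x) ^ 2 = 2 ^ n * ∑ j, w j ^ 2 := by
  induction n with
  | zero => simp [Tsum]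
  | succ n ih =>
    rw [sum_cube_succ]
    have inner : ∀ c : ℝ, ∑ y : Fin n → Fin 2, (c + Tsum (fun j => w j.succ) y) ^ 2
        = 2 ^ n * c ^ 2 + 2 * c * (∑ y : Fin n → Fin 2, Tsum (fun j => w j.succ) y)
          + ∑ y : Fin n → Fin 2, (Tsum (fun j => w j.succ) y) ^ 2 := by
      intro c
      have h : ∀ y : Fin n → Fin 2, (c + Tsum (fun j => w j.succ) y) ^ 2
          = c ^ 2 + 2 * c * Tsum (fun j => w j.succ) y + (Tsum (fun j => w j.succ) y) ^ 2 :=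
        fun y => by ring
      simp_rw [h]
      rw [Finset.sum_add_distrib, Finset.sum_add_distrib, Finset.sum_const, ← Finset.mul_sum,
        card_cube, nsmul_eq_mul]
      push_cast
      ring
    simp_rw [Tsum_cons]
    rw [Fin.sum_univ_two, rad_zero, rad_one, inner, inner, ih, Fin.sum_univ_succ]
    ring

lemma sum_T_four {n : ℕ} (w : Fin n → ℝ) :
    ∑ x : Fin n → Fin 2, (Tsum w x) ^ 4 ≤ 3 * 2 ^ n * (∑ j, w j ^ 2) ^ 2 := by
  induction n with
  | zero => simp [Tsum]
  | succ n ih =>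
    rw [sum_cube_succ]
    have inner : ∀ c : ℝ, ∑ y : Fin n → Fin 2, (c + Tsum (fun j => w j.succ) y) ^ 4
        = 2 ^ n * c ^ 4 + 4 * c ^ 3 * (∑ y : Fin n → Fin 2, Tsum (fun j => w j.succ) y)
          + 6 * c ^ 2 * (∑ y : Fin n → Fin 2, (Tsum (fun j => w j.succ) y) ^ 2)
          + 4 * c * (∑ y : Fin n → Fin 2, (Tsum (fun j => w j.succ) y) ^ 3)
          + ∑ y : Fin n → Fin 2, (Tsum (fun j => w j.succ) y) ^ 4 := by
      intro c
      have h : ∀ y : Fin n → Fin 2, (c + Tsum (fun j => w j.succ) y) ^ 4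
          = c ^ 4 + 4 * c ^ 3 * Tsum (fun j => w j.succ) y
            + 6 * c ^ 2 * (Tsum (fun j => w j.succ) y) ^ 2
            + 4 * c * (Tsum (fun j => w j.succ) y) ^ 3
            + (Tsum (fun j => w j.succ) y) ^ 4 := fun y => by ring
      simp_rw [h]
      rw [Finset.sum_add_distrib, Finset.sum_add_distrib, Finset.sum_add_distrib,
        Finset.sum_add_distrib, Finset.sum_const, ← Finset.mul_sum, ← Finset.mul_sum,
        ← Finset.mul_sum, card_cube, nsmul_eq_mul]
      push_cast
      ring
    simp_rw [Tsum_cons]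
    rw [Fin.sum_univ_two, rad_zero, rad_one, inner, inner, sum_T_sq]
    have hA : (0:ℝ) ≤ ∑ j : Fin n, w j.succ ^ 2 := by positivity
    have h2n : (0:ℝ) < 2 ^ n := by positivity
    rw [Fin.sum_univ_succ]
    have h21 : (2:ℝ) ^ (n+1) = 2 * 2 ^ n := by ring
    rw [h21]
    nlinarith [ih (fun j => w j.succ), sq_nonneg (w 0 ^ 2),
      mul_nonneg h2n.le (sq_nonneg (w 0 ^ 2)),
      mul_nonneg (mul_nonneg h2n.le (sq_nonneg (w 0))) hA]

theorem weak_concentration {n : ℕ} (v : Fin n → ℝ)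
    (hv : Real.sqrt (∑ j, v j ^ 2) = 1) (C₀ : ℝ) (hC₀ : C₀ ≥ 4.706) :
    cubeProb n {x | 1 / C₀ ≤ |∑ j, ((x j : ℕ) : ℝ) * v j - (1 / 2) * ∑ j, v j| ∧
        |∑ j, ((x j : ℕ) : ℝ) * v j - (1 / 2) * ∑ j, v j| ≤ C₀}
      ≥ 1 / C₀ := by
  classical
  have hC0 : (0:ℝ) < C₀ := by nlinarith
  have hs : ∑ j, v j ^ 2 = 1 := Real.sqrt_eq_one.mp hv
  set T := Tsum v with hT
  have hDT : ∀ x : Fin n → Fin 2, ∑ j, ((x j : ℕ) : ℝ) * v j - (1 / 2) * ∑ j, v j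
      = T x / 2 := by
    intro x
    rw [hT]
    unfold Tsum rad
    rw [Finset.mul_sum, ← Finset.sum_sub_distrib, Finset.sum_div]
    exact Finset.sum_congr rfl fun j _ => by ring
  have hM2 : ∑ x : Fin n → Fin 2, (T x) ^ 2 = 2 ^ n := by
    rw [hT, sum_T_sq, hs, mul_one]
  have hM4 : ∑ x : Fin n → Fin 2, (T x) ^ 4 ≤ 3 * 2 ^ n := by
    have h := sum_T_four v
    rw [hs] at h
    simpa using h
  set N : ℝ := 2 ^ n with hN
  have hNpos : 0 < N := by positivity
  set A : Finset (Fin n → Fin 2) := Finset.univ.filter (fun x => 2 / C₀ ≤ |T x|) with hA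
  set Hi : Finset (Fin n → Fin 2) := Finset.univ.filter (fun x => 2 * C₀ < |T x|) with hHi
  have hHiA : Hi ⊆ A := by
    intro x hx
    simp only [hHi, hA, Finset.mem_filter, Finset.mem_univ, true_and] at *
    refine le_trans ?_ hx.le
    rw [div_le_iff₀ hC0]; nlinarith
  have hHiCard : (Hi.card : ℝ) * (4 * C₀ ^ 2) ≤ N := by
    have h1 : ∀ x ∈ Hi, 4 * C₀ ^ 2 ≤ (T x) ^ 2 := by
      intro x hx
      simp only [hHi, Finset.mem_filter, Finset.mem_univ, true_and] at hx
      have := pow_le_pow_left₀ (by positivity) hx.le 2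
      rw [sq_abs] at this
      nlinarith
    calc (Hi.card : ℝ) * (4 * C₀ ^ 2) ≤ ∑ x ∈ Hi, (T x) ^ 2 := by
          have := Finset.card_nsmul_le_sum Hi (fun x => (T x) ^ 2) (4 * C₀ ^ 2) h1
          simpa [nsmul_eq_mul] using this
      _ ≤ ∑ x : Fin n → Fin 2, (T x) ^ 2 :=
          Finset.sum_le_sum_of_subset_of_nonneg (Finset.subset_univ Hi)
            (fun x _ _ => sq_nonneg _)
      _ = N := hM2
  have hAsum : N * (1 - 4 / C₀ ^ 2) ≤ ∑ x ∈ A, (T x) ^ 2 := by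
    have hsplit := Finset.sum_filter_add_sum_filter_not Finset.univ
      (fun x => 2 / C₀ ≤ |T x|) (fun x => (T x) ^ 2)
    have hnot : ∑ x ∈ Finset.univ.filter (fun x => ¬ (2 / C₀ ≤ |T x|)), (T x) ^ 2
        ≤ N * (4 / C₀ ^ 2) := by
      have h1 : ∀ x ∈ Finset.univ.filter (fun x => ¬ (2 / C₀ ≤ |T x|)),
          (T x) ^ 2 ≤ 4 / C₀ ^ 2 := by
        intro x hx
        simp only [Finset.mem_filter, Finset.mem_univ, true_and, not_le] at hx
        have h2 := pow_le_pow_left₀ (abs_nonneg (T x)) hx.le 2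
        rw [sq_abs] at h2
        calc (T x) ^ 2 ≤ (2 / C₀) ^ 2 := h2
          _ = 4 / C₀ ^ 2 := by rw [div_pow]; norm_num
      calc ∑ x ∈ Finset.univ.filter (fun x => ¬ (2 / C₀ ≤ |T x|)), (T x) ^ 2
          ≤ (Finset.univ.filter (fun x => ¬ (2 / C₀ ≤ |T x|))).card • (4 / C₀ ^ 2) :=
            Finset.sum_le_card_nsmul _ _ _ h1
        _ ≤ (2 ^ n : ℕ) • (4 / C₀ ^ 2) := by
            refine nsmul_le_nsmul_left (by positivity) ?_
            calc (Finset.univ.filter (fun x => ¬ (2 / C₀ ≤ |T x|))).card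
                ≤ (Finset.univ : Finset (Fin n → Fin 2)).card := Finset.card_filter_le _ _
              _ = 2 ^ n := card_cube n
        _ = N * (4 / C₀ ^ 2) := by rw [nsmul_eq_mul]; push_cast [hN]; ring
    have heq : ∑ x ∈ A, (T x) ^ 2
        = N - ∑ x ∈ Finset.univ.filter (fun x => ¬ (2 / C₀ ≤ |T x|)), (T x) ^ 2 := by
      rw [hA]; linarith [hsplit, hM2]
    rw [heq]
    have e : N * (1 - 4 / C₀ ^ 2) = N - N * (4 / C₀ ^ 2) := by ring
    linarith
  have hCS : (∑ x ∈ A, (T x) ^ 2) ^ 2 ≤ (A.card : ℝ) * (3 * N) := by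
    have h1 := sq_sum_le_card_mul_sum_sq (s := A) (f := fun x => (T x) ^ 2)
    have h2 : ∑ x ∈ A, ((T x) ^ 2) ^ 2 ≤ 3 * N := by
      calc ∑ x ∈ A, ((T x) ^ 2) ^ 2 = ∑ x ∈ A, (T x) ^ 4 :=
            Finset.sum_congr rfl fun x _ => by ring
        _ ≤ ∑ x : Fin n → Fin 2, (T x) ^ 4 :=
            Finset.sum_le_sum_of_subset_of_nonneg (Finset.subset_univ A)
              (fun x _ _ => by positivity)
        _ ≤ 3 * N := hM4
    calc (∑ x ∈ A, (T x) ^ 2) ^ 2 ≤ (A.card : ℝ) * ∑ x ∈ A, ((T x) ^ 2) ^ 2 := h1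
      _ ≤ (A.card : ℝ) * (3 * N) := mul_le_mul_of_nonneg_left h2 (Nat.cast_nonneg _)
  have hc : (0:ℝ) < 1 - 4 / C₀ ^ 2 := by
    rw [sub_pos, div_lt_iff₀ (by positivity)]
    nlinarith
  have hACard : N * (1 - 4 / C₀ ^ 2) ^ 2 / 3 ≤ (A.card : ℝ) := by
    have h1 : (N * (1 - 4 / C₀ ^ 2)) ^ 2 ≤ (∑ x ∈ A, (T x) ^ 2) ^ 2 :=
      pow_le_pow_left₀ (by positivity) hAsum 2
    have h2 : (N * (1 - 4 / C₀ ^ 2)) ^ 2 ≤ (A.card : ℝ) * (3 * N) := le_trans h1 hCS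
    rw [div_le_iff₀ (by norm_num : (0:ℝ) < 3)]
    nlinarith [h2, hNpos]
  set G : Finset (Fin n → Fin 2) := Finset.univ.filter
    (fun x => 1 / C₀ ≤ |T x / 2| ∧ |T x / 2| ≤ C₀) with hG
  have hGAHi : G = A \ Hi := by
    ext x
    simp only [hG, hA, hHi, Finset.mem_filter, Finset.mem_sdiff, Finset.mem_univ, true_and,
      not_lt, abs_div, abs_two]
    constructor
    · rintro ⟨h1, h2⟩
      refine ⟨?_, ?_⟩
      · rw [div_le_iff₀ hC0]
        rw [div_le_div_iff₀ hC0 (by norm_num : (0:ℝ) < 2)] at h1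
        linarith
      · rw [div_le_iff₀ (by norm_num : (0:ℝ) < 2)] at h2
        linarith
    · rintro ⟨h1, h2⟩
      refine ⟨?_, ?_⟩
      · rw [div_le_div_iff₀ hC0 (by norm_num : (0:ℝ) < 2)]
        rw [div_le_iff₀ hC0] at h1
        linarith
      · rw [div_le_iff₀ (by norm_num : (0:ℝ) < 2)]
        linarith
  have hGCard : N * ((1 - 4 / C₀ ^ 2) ^ 2 / 3 - 1 / (4 * C₀ ^ 2)) ≤ (G.card : ℝ) := by
    rw [hGAHi, Finset.card_sdiff_of_subset hHiA]
    have h1 : (Hi.card : ℝ) ≤ N / (4 * C₀ ^ 2) := by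
      rw [le_div_iff₀ (by positivity)]
      exact hHiCard
    have h2 : ((A.card - Hi.card : ℕ) : ℝ) = (A.card : ℝ) - (Hi.card : ℝ) :=
      Nat.cast_sub (Finset.card_le_card hHiA)
    rw [h2]
    have e : N * ((1 - 4 / C₀ ^ 2) ^ 2 / 3 - 1 / (4 * C₀ ^ 2))
        = N * (1 - 4 / C₀ ^ 2) ^ 2 / 3 - N / (4 * C₀ ^ 2) := by ring
    linarith
  have hkey : 1 / C₀ ≤ (1 - 4 / C₀ ^ 2) ^ 2 / 3 - 1 / (4 * C₀ ^ 2) := by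
    have h1 : (0:ℝ) ≤ C₀ - 4.706 := by linarith
    have h : (0:ℝ) ≤ 4 * C₀ ^ 4 - 12 * C₀ ^ 3 - 35 * C₀ ^ 2 + 64 := by
      nlinarith [mul_nonneg (mul_nonneg h1 h1) h1, sq_nonneg (C₀ - 4.706),
        mul_nonneg h1 (sq_nonneg C₀), mul_nonneg (mul_nonneg h1 h1) (by linarith : (0:ℝ) ≤ C₀)]
    have e : (1 - 4 / C₀ ^ 2) ^ 2 / 3 - 1 / (4 * C₀ ^ 2) - 1 / C₀
        = (4 * C₀ ^ 4 - 12 * C₀ ^ 3 - 35 * C₀ ^ 2 + 64) / (12 * C₀ ^ 4) := by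
      field_simp
      ring
    have hd : (0:ℝ) ≤ (4 * C₀ ^ 4 - 12 * C₀ ^ 3 - 35 * C₀ ^ 2 + 64) / (12 * C₀ ^ 4) :=
      div_nonneg h (by positivity)
    linarith [e, hd]
  have hfinal : N / C₀ ≤ (G.card : ℝ) := by
    calc N / C₀ = N * (1 / C₀) := by ring
      _ ≤ N * ((1 - 4 / C₀ ^ 2) ^ 2 / 3 - 1 / (4 * C₀ ^ 2)) :=
          mul_le_mul_of_nonneg_left hkey hNpos.le
      _ ≤ (G.card : ℝ) := hGCard
  have hncard : ({x | 1 / C₀ ≤ |∑ j, ((x j : ℕ) : ℝ) * v j - (1 / 2) * ∑ j, v j| ∧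
      |∑ j, ((x j : ℕ) : ℝ) * v j - (1 / 2) * ∑ j, v j| ≤ C₀} : Set (Fin n → Fin 2)).ncard
      = G.card := by
    rw [Set.ncard_eq_toFinset_card']
    congr 1
    ext x
    simp only [Set.mem_toFinset, Set.mem_setOf_eq, hG, Finset.mem_filter, Finset.mem_univ,
      true_and, hDT x]
  unfold cubeProb
  rw [hncard, ge_iff_le, le_div_iff₀ (by positivity : (0:ℝ) < (2:ℝ) ^ n)]
  calc 1 / C₀ * 2 ^ n = N / C₀ := by rw [hN]; ring
    _ ≤ (G.card : ℝ) := hfinal
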